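/- arXiv:2005.04154 — 2 statements merged into one kernel-verified Lean document; each statement's English description precedes it below -/
import Mathlib

section
/- Let K ≥ 1 and let X, Y_1, …, Y_K be independent real-valued random variables, where X is exponentially distributed with rate a > 0 and each Y_i is exponentially distributed with rate b_i > 0, the rates b_1, …, b_K being pairwise distinct. Let p_0 > 0 be a constant. Then the random variable R = X / (Y_1 + ⋯ + Y_K + p_0) has a probability density function with respect to Lebesgue measure given, for r ≥ 0, by f_R(r) = Σ_{i=1}^{K} a · b_i · A_i · e^{−a p_0 r} · ((a r + b_i) p_0 + 1) / (a r + b_i)², where A_i = ∏_{l ≠ i} b_l / (b_l − b_i). -/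
open MeasureTheory ProbabilityTheory Finset

section SINRAux

open Real

variable {K : ℕ} {a p0 : ℝ} {b : Fin K → ℝ}

lemma lagrange_key {K : ℕ} (hK : 1 ≤ K) (b : Fin K → ℝ) (hdist : Function.Injective b)
    (x : ℝ) (hx : ∀ i, x + b i ≠ 0) :
    ∑ i : Fin K, (∏ l ∈ Finset.univ.erase i, b l / (b l - b i)) * (b i / (x + b i)) =
      ∏ i : Fin K, b i / (x + b i) := by
  have hne : Nonempty (Fin K) := ⟨⟨0, hK⟩⟩
  have hinj : Set.InjOn (fun i => -(b i)) (Finset.univ : Finset (Fin K)) :=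
    fun i _ j _ h => hdist (by simpa [neg_inj] using h)
  have hsum := Lagrange.sum_basis hinj ⟨Classical.arbitrary _, mem_univ _⟩
  have hev := congrArg (Polynomial.eval x) hsum
  rw [Polynomial.eval_finset_sum, Polynomial.eval_one] at hev
  have hev' : ∑ i : Fin K, ∏ j ∈ Finset.univ.erase i, ((x + b j) / (b j - b i)) = 1 := by
    rw [← hev]
    refine Finset.sum_congr rfl fun i _ => ?_
    rw [Lagrange.basis, Polynomial.eval_prod]
    refine Finset.prod_congr rfl fun j hj => ?_
    simp only [Lagrange.basisDivisor, Polynomial.eval_mul, Polynomial.eval_C,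
      Polynomial.eval_sub, Polynomial.eval_X]
    rw [show -b i - -b j = b j - b i by ring, show x - -b j = x + b j by ring, div_eq_inv_mul]
  calc ∑ i : Fin K, (∏ l ∈ Finset.univ.erase i, b l / (b l - b i)) * (b i / (x + b i))
      = ∑ i : Fin K, (∏ j ∈ Finset.univ.erase i, ((x + b j) / (b j - b i))) *
          ∏ l : Fin K, b l / (x + b l) := by
        refine Finset.sum_congr rfl fun i _ => ?_
        have h1 : ∀ j ∈ Finset.univ.erase i,
            b j / (b j - b i) = (x + b j) / (b j - b i) * (b j / (x + b j)) := by
          intro j hj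
          rw [div_mul_div_comm, mul_comm (x + b j), mul_div_mul_right _ _ (hx j)]
        rw [Finset.prod_congr rfl h1, Finset.prod_mul_distrib,
          ← Finset.mul_prod_erase Finset.univ (fun l => b l / (x + b l)) (mem_univ i)]
        ring
    _ = ∏ i : Fin K, b i / (x + b i) := by rw [← Finset.sum_mul, hev', one_mul]

lemma hasDerivAt_phi (ha : 0 < a) (hp0 : 0 < p0) (hpos : ∀ i, 0 < b i) {u : ℝ} (hu : 0 ≤ u) :
    HasDerivAt (fun u : ℝ => ∑ i : Fin K,
        (∏ l ∈ Finset.univ.erase i, b l / (b l - b i)) * b i * (Real.exp (-(a * p0 * u)) / (a * u + b i)))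
      (-(∑ i : Fin K, a * b i * (∏ l ∈ Finset.univ.erase i, b l / (b l - b i)) *
          Real.exp (-(a * p0 * u)) * ((a * u + b i) * p0 + 1) / (a * u + b i) ^ 2)) u := by
  have h := HasDerivAt.fun_sum (x := u) (u := (Finset.univ : Finset (Fin K)))
    (A := fun i u => (∏ l ∈ Finset.univ.erase i, b l / (b l - b i)) * b i *
        (Real.exp (-(a * p0 * u)) / (a * u + b i)))
    (A' := fun i => -(a * b i * (∏ l ∈ Finset.univ.erase i, b l / (b l - b i)) *
        Real.exp (-(a * p0 * u)) * ((a * u + b i) * p0 + 1) / (a * u + b i) ^ 2))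
    (fun i _ => ?_)
  · simpa [Finset.sum_neg_distrib] using h
  · have hden : 0 < a * u + b i := by nlinarith [hpos i, mul_nonneg ha.le hu]
    have h1 : HasDerivAt (fun u : ℝ => -(a * p0 * u)) (-(a * p0)) u := by
      simpa using ((hasDerivAt_id u).const_mul (-(a * p0)))
    have hexp := h1.exp
    have h2 : HasDerivAt (fun u : ℝ => a * u + b i) a u := by
      simpa using ((hasDerivAt_id u).const_mul a).add_const (b i)
    have hdiv := hexp.fun_div h2 (ne_of_gt hden)
    have := hdiv.const_mul ((∏ l ∈ Finset.univ.erase i, b l / (b l - b i)) * b i)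
    convert this using 1
    · rfl
    field_simp
    ring

lemma deriv_swap (hK : 1 ≤ K) (hpos : ∀ i, 0 < b i) (hdist : Function.Injective b)
    {x : ℝ} (hx : 0 ≤ x) :
    ∑ i : Fin K, (∏ l ∈ Finset.univ.erase i, b l / (b l - b i)) * (-(b i) / (x + b i) ^ 2) =
      ∑ i : Fin K, (∏ l ∈ Finset.univ.erase i, b l / (x + b l)) * (-(b i) / (x + b i) ^ 2) := by
  have hxb : ∀ i, 0 < x + b i := fun i => by linarith [hpos i]
  have hd1 : HasDerivAt (fun y : ℝ => ∑ i : Fin K,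
      (∏ l ∈ Finset.univ.erase i, b l / (b l - b i)) * (b i / (y + b i)))
      (∑ i : Fin K, (∏ l ∈ Finset.univ.erase i, b l / (b l - b i)) * (-(b i) / (x + b i) ^ 2))
      x := by
    refine HasDerivAt.fun_sum fun i _ => ?_
    have h2 : HasDerivAt (fun y : ℝ => y + b i) 1 x := (hasDerivAt_id x).add_const _
    have h3 := ((hasDerivAt_const x (b i)).fun_div h2 (ne_of_gt (hxb i))).const_mul
      (∏ l ∈ Finset.univ.erase i, b l / (b l - b i))
    convert h3 using 1
    · rfl
    ring
  have hd2 : HasDerivAt (fun y : ℝ => ∏ i : Fin K, b i / (y + b i))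
      (∑ i : Fin K, (∏ l ∈ Finset.univ.erase i, b l / (x + b l)) * (-(b i) / (x + b i) ^ 2))
      x := by
    have h := HasDerivAt.fun_finsetProd (u := (Finset.univ : Finset (Fin K)))
      (f := fun i (y : ℝ) => b i / (y + b i))
      (f' := fun i => -(b i) / (x + b i) ^ 2) (x := x) (fun i _ => ?_)
    · simpa [smul_eq_mul] using h
    · have h2 : HasDerivAt (fun y : ℝ => y + b i) 1 x := (hasDerivAt_id x).add_const _
      have h3 := (hasDerivAt_const x (b i)).fun_div h2 (ne_of_gt (hxb i))
      convert h3 using 1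
      ring
  have hopen : ∀ᶠ y in nhds x, ∀ i, 0 < y + b i := by
    rw [Filter.eventually_all]
    intro i
    have hg : ContinuousAt (fun y : ℝ => y + b i) x := by fun_prop
    exact ContinuousAt.eventually_lt (f := fun _ => (0 : ℝ)) continuousAt_const hg (hxb i)
  have heq : (fun y : ℝ => ∑ i : Fin K,
      (∏ l ∈ Finset.univ.erase i, b l / (b l - b i)) * (b i / (y + b i))) =ᶠ[nhds x]
      (fun y : ℝ => ∏ i : Fin K, b i / (y + b i)) :=
    hopen.mono fun y hy => lagrange_key hK b hdist y (fun i => ne_of_gt (hy i))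
  exact hd1.unique (hd2.congr_of_eventuallyEq heq)

lemma f_nonneg (hK : 1 ≤ K) (ha : 0 < a) (hp0 : 0 < p0) (hpos : ∀ i, 0 < b i)
    (hdist : Function.Injective b) {u : ℝ} (hu : 0 ≤ u) :
    0 ≤ ∑ i : Fin K, a * b i * (∏ l ∈ Finset.univ.erase i, b l / (b l - b i)) *
        Real.exp (-(a * p0 * u)) * ((a * u + b i) * p0 + 1) / (a * u + b i) ^ 2 := by
  have hx0 : 0 ≤ a * u := mul_nonneg ha.le hu
  have hxb : ∀ i, 0 < a * u + b i := fun i => by linarith [hpos i]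
  have hterm : ∀ i ∈ (Finset.univ : Finset (Fin K)),
      a * b i * (∏ l ∈ Finset.univ.erase i, b l / (b l - b i)) *
        Real.exp (-(a * p0 * u)) * ((a * u + b i) * p0 + 1) / (a * u + b i) ^ 2 =
      a * Real.exp (-(a * p0 * u)) *
        (p0 * ((∏ l ∈ Finset.univ.erase i, b l / (b l - b i)) * (b i / (a * u + b i))) +
          (∏ l ∈ Finset.univ.erase i, b l / (b l - b i)) * (b i / (a * u + b i) ^ 2)) := by
    intro i _
    have hD := (hxb i).ne'
    generalize (∏ l ∈ Finset.univ.erase i, b l / (b l - b i)) = A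
    field_simp
  rw [Finset.sum_congr rfl hterm, ← Finset.mul_sum, Finset.sum_add_distrib, ← Finset.mul_sum]
  have hS1 : 0 ≤ ∑ i : Fin K,
      (∏ l ∈ Finset.univ.erase i, b l / (b l - b i)) * (b i / (a * u + b i)) := by
    rw [lagrange_key hK b hdist _ (fun i => ne_of_gt (hxb i))]
    exact Finset.prod_nonneg fun i _ => div_nonneg (hpos i).le (hxb i).le
  have hS2 : 0 ≤ ∑ i : Fin K,
      (∏ l ∈ Finset.univ.erase i, b l / (b l - b i)) * (b i / (a * u + b i) ^ 2) := by
    have h := deriv_swap hK hpos hdist hx0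
    have h2 : ∑ i : Fin K,
        (∏ l ∈ Finset.univ.erase i, b l / (b l - b i)) * (b i / (a * u + b i) ^ 2) =
        ∑ i : Fin K,
        (∏ l ∈ Finset.univ.erase i, b l / (a * u + b l)) * (b i / (a * u + b i) ^ 2) := by
      calc ∑ i : Fin K,
          (∏ l ∈ Finset.univ.erase i, b l / (b l - b i)) * (b i / (a * u + b i) ^ 2)
          = ∑ i : Fin K,
            -((∏ l ∈ Finset.univ.erase i, b l / (b l - b i)) * (-(b i) / (a * u + b i) ^ 2)) :=
            Finset.sum_congr rfl fun i _ => by ring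
        _ = -∑ i : Fin K,
            (∏ l ∈ Finset.univ.erase i, b l / (b l - b i)) * (-(b i) / (a * u + b i) ^ 2) := by
            rw [Finset.sum_neg_distrib]
        _ = -∑ i : Fin K,
            (∏ l ∈ Finset.univ.erase i, b l / (a * u + b l)) * (-(b i) / (a * u + b i) ^ 2) := by
            rw [h]
        _ = ∑ i : Fin K,
            -((∏ l ∈ Finset.univ.erase i, b l / (a * u + b l)) * (-(b i) / (a * u + b i) ^ 2)) := by
            rw [Finset.sum_neg_distrib]
        _ = ∑ i : Fin K,
            (∏ l ∈ Finset.univ.erase i, b l / (a * u + b l)) * (b i / (a * u + b i) ^ 2) :=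
            Finset.sum_congr rfl fun i _ => by ring
    rw [h2]
    refine Finset.sum_nonneg fun i _ => mul_nonneg
      (Finset.prod_nonneg fun l _ => div_nonneg (hpos l).le (hxb l).le)
      (div_nonneg (hpos i).le (by positivity))
  have he : (0 : ℝ) ≤ a * Real.exp (-(a * p0 * u)) := by positivity
  exact mul_nonneg he (by nlinarith)

lemma cont_f (ha : 0 < a) (hpos : ∀ i, 0 < b i) {r : ℝ} (hr : 0 ≤ r) :
    ContinuousOn (fun u : ℝ => ∑ i : Fin K,
        a * b i * (∏ l ∈ Finset.univ.erase i, b l / (b l - b i)) *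
          Real.exp (-(a * p0 * u)) * ((a * u + b i) * p0 + 1) / (a * u + b i) ^ 2)
      (Set.uIcc 0 r) := by
  refine continuousOn_finset_sum _ fun i _ => ContinuousOn.div (by fun_prop) (by fun_prop) ?_
  intro u hu
  rw [Set.uIcc_of_le hr] at hu
  have : 0 < a * u + b i := by nlinarith [hpos i, mul_nonneg ha.le hu.1]
  positivity

lemma integral_f (hK : 1 ≤ K) (ha : 0 < a) (hp0 : 0 < p0) (hpos : ∀ i, 0 < b i)
    (hdist : Function.Injective b) {r : ℝ} (hr : 0 ≤ r) :
    ∫ u in (0:ℝ)..r, (∑ i : Fin K,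
        a * b i * (∏ l ∈ Finset.univ.erase i, b l / (b l - b i)) *
          Real.exp (-(a * p0 * u)) * ((a * u + b i) * p0 + 1) / (a * u + b i) ^ 2)
      = 1 - Real.exp (-(a * p0 * r)) * ∏ i : Fin K, b i / (a * r + b i) := by
  have hxb : ∀ (u : ℝ), 0 ≤ u → ∀ i, 0 < a * u + b i := fun u hu i => by
    nlinarith [hpos i, mul_nonneg ha.le hu]
  have hderiv : ∀ t ∈ Set.uIcc (0:ℝ) r, HasDerivAt (fun u : ℝ => ∑ i : Fin K,
        (∏ l ∈ Finset.univ.erase i, b l / (b l - b i)) * b i *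
          (Real.exp (-(a * p0 * u)) / (a * u + b i)))
      (-(∑ i : Fin K, a * b i * (∏ l ∈ Finset.univ.erase i, b l / (b l - b i)) *
          Real.exp (-(a * p0 * t)) * ((a * t + b i) * p0 + 1) / (a * t + b i) ^ 2)) t := by
    intro t ht
    rw [Set.uIcc_of_le hr] at ht
    exact hasDerivAt_phi ha hp0 hpos ht.1
  have hint : IntervalIntegrable (fun u : ℝ => -(∑ i : Fin K,
      a * b i * (∏ l ∈ Finset.univ.erase i, b l / (b l - b i)) *
        Real.exp (-(a * p0 * u)) * ((a * u + b i) * p0 + 1) / (a * u + b i) ^ 2))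
      MeasureTheory.volume 0 r :=
    ((cont_f ha hpos hr).neg).intervalIntegrable
  have hftc := intervalIntegral.integral_eq_sub_of_hasDerivAt hderiv hint
  rw [intervalIntegral.integral_neg] at hftc
  have hphi0 : ∑ i : Fin K, (∏ l ∈ Finset.univ.erase i, b l / (b l - b i)) * b i *
      (Real.exp (-(a * p0 * 0)) / (a * 0 + b i)) = 1 := by
    have h1 : ∀ i ∈ (Finset.univ : Finset (Fin K)),
        (∏ l ∈ Finset.univ.erase i, b l / (b l - b i)) * b i *
          (Real.exp (-(a * p0 * 0)) / (a * 0 + b i)) =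
        (∏ l ∈ Finset.univ.erase i, b l / (b l - b i)) * (b i / ((0:ℝ) + b i)) := by
      intro i _; norm_num; ring
    rw [Finset.sum_congr rfl h1,
      lagrange_key hK b hdist 0 (fun i => by simpa using (hpos i).ne')]
    exact Finset.prod_eq_one fun i _ => by rw [zero_add, div_self (hpos i).ne']
  have hphir : ∑ i : Fin K, (∏ l ∈ Finset.univ.erase i, b l / (b l - b i)) * b i *
      (Real.exp (-(a * p0 * r)) / (a * r + b i)) =
      Real.exp (-(a * p0 * r)) * ∏ i : Fin K, b i / (a * r + b i) := by
    have h1 : ∀ i ∈ (Finset.univ : Finset (Fin K)),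
        (∏ l ∈ Finset.univ.erase i, b l / (b l - b i)) * b i *
          (Real.exp (-(a * p0 * r)) / (a * r + b i)) =
        Real.exp (-(a * p0 * r)) *
          ((∏ l ∈ Finset.univ.erase i, b l / (b l - b i)) * (b i / (a * r + b i))) := by
      intro i _; ring
    rw [Finset.sum_congr rfl h1, ← Finset.mul_sum,
      lagrange_key hK b hdist (a * r) (fun i => (hxb r hr i).ne')]
  linarith [hftc, hphi0, hphir]

lemma expMeasure_Iic {c : ℝ} (hc : 0 < c) (y : ℝ) :
    expMeasure c (Set.Iic y) = ENNReal.ofReal (if 0 ≤ y then 1 - Real.exp (-(c * y)) else 0) := by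
  have := isProbabilityMeasure_expMeasure hc
  rw [← ProbabilityTheory.ofReal_cdf,
    cdf_expMeasure_eq hc]

lemma ae_nonneg_of_expLaw {Ω : Type*} [MeasurableSpace Ω] {μ : Measure Ω} {W : Ω → ℝ}
    (hW : Measurable W) {c : ℝ} (hc : 0 < c) (h : Measure.map W μ = expMeasure c) :
    ∀ᵐ ω ∂μ, 0 ≤ W ω := by
  rw [MeasureTheory.ae_iff]
  have hset : {ω | ¬ 0 ≤ W ω} = W ⁻¹' Set.Iio 0 := by ext ω; simp [not_le]
  rw [hset, ← Measure.map_apply hW measurableSet_Iio, h]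
  refine le_antisymm (le_trans (measure_mono Set.Iio_subset_Iic_self) ?_) zero_le
  rw [expMeasure_Iic hc 0]
  simp

lemma lintegral_exp_expMeasure {c t : ℝ} (hc : 0 < c) (ht : 0 ≤ t) :
    ∫⁻ x, ENNReal.ofReal (Real.exp (-(t * x))) ∂(expMeasure c) =
      ENNReal.ofReal (c / (c + t)) := by
  have hct : 0 < c + t := by linarith
  have hmeas : Measurable (fun x => exponentialPDF c x) :=
    fun s hs => (measurable_exponentialPDFReal c).ennreal_ofReal hs
  have hg : Measurable (fun x : ℝ => ENNReal.ofReal (Real.exp (-(t * x)))) := by fun_prop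
  rw [show expMeasure c = MeasureTheory.volume.withDensity (fun x => exponentialPDF c x) from rfl,
    lintegral_withDensity_eq_lintegral_mul _ hmeas hg]
  have hpt : ∀ x : ℝ, ((fun x => exponentialPDF c x) *
      fun x => ENNReal.ofReal (Real.exp (-(t * x)))) x =
      ENNReal.ofReal (c / (c + t)) * exponentialPDF (c + t) x := by
    intro x
    simp only [Pi.mul_apply, exponentialPDF_eq]
    have h0 : (0:ℝ) ≤ if 0 ≤ x then c * Real.exp (-(c * x)) else 0 := by
      split <;> positivity
    rw [← ENNReal.ofReal_mul h0, ← ENNReal.ofReal_mul (by positivity : (0:ℝ) ≤ c / (c + t))]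
    congr 1
    split_ifs with hx
    · rw [mul_assoc, ← Real.exp_add, show -(c * x) + -(t * x) = -((c + t) * x) by ring]
      field_simp
    · simp
  rw [lintegral_congr hpt, lintegral_const_mul' _ _ ENNReal.ofReal_ne_top]
  rw [show ∫⁻ x, exponentialPDF (c + t) x = 1 from lintegral_exponentialPDF_eq_one hct, mul_one]

lemma mgf_expLaw {Ω : Type*} [MeasurableSpace Ω] {μ : Measure Ω} {W : Ω → ℝ}
    (hW : Measurable W) {c t : ℝ} (hc : 0 < c) (ht : 0 ≤ t)
    (h : Measure.map W μ = expMeasure c) :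
    mgf W μ (-t) = c / (c + t) := by
  have hct : 0 < c + t := by linarith
  rw [mgf]
  rw [integral_eq_lintegral_of_nonneg_ae (Filter.Eventually.of_forall fun ω => (Real.exp_pos _).le)
    ((hW.const_mul (-t)).exp.aestronglyMeasurable)]
  have heq : ∀ ω, ENNReal.ofReal (Real.exp (-t * W ω)) =
      (fun x : ℝ => ENNReal.ofReal (Real.exp (-(t * x)))) (W ω) := by
    intro ω; simp [neg_mul]
  rw [lintegral_congr heq, ← lintegral_map (f := fun x : ℝ => ENNReal.ofReal (Real.exp (-(t * x)))) (by fun_prop) hW, h,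
    lintegral_exp_expMeasure hc ht, ENNReal.toReal_ofReal (by positivity)]

end SINRAux

/-- Proposition 1 of the paper: if `X ~ Exp(a)` and `Y i ~ Exp(b i)` are independent with
pairwise distinct positive rates `b i`, and `p₀ > 0`, then the SINR
`R = X / (Y 1 + ⋯ + Y K + p₀)` has a pdf w.r.t. Lebesgue measure given, for `r ≥ 0`, by
`∑ i, a * b i * A i * exp (-(a p₀ r)) * ((a r + b i) p₀ + 1) / (a r + b i)²`,
where `A i = ∏_{l ≠ i} b l / (b l - b i)`. -/
theorem stmt_0 {Ω : Type*} [MeasurableSpace Ω] (μ : Measure Ω) [IsProbabilityMeasure μ]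
    (K : ℕ) (hK : 1 ≤ K) (a : ℝ) (ha : 0 < a) (b : Fin K → ℝ)
    (hpos : ∀ i, 0 < b i) (hdist : Function.Injective b)
    (p0 : ℝ) (hp0 : 0 < p0)
    (X : Ω → ℝ) (hXmeas : Measurable X)
    (Y : Fin K → Ω → ℝ) (hYmeas : ∀ i, Measurable (Y i))
    (hindep : iIndepFun (Fin.cons X Y : Fin (K + 1) → Ω → ℝ) μ)
    (hXdist : Measure.map X μ = expMeasure a)
    (hYdist : ∀ i, Measure.map (Y i) μ = expMeasure (b i))
    (R : Ω → ℝ) (hR : ∀ ω, R ω = X ω / (∑ i : Fin K, Y i ω + p0)) :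
    HasPDF R μ volume ∧
      ∀ᵐ r ∂(volume.restrict (Set.Ici (0 : ℝ))),
        pdf R μ volume r =
          ENNReal.ofReal (∑ i : Fin K,
            a * b i * (∏ l ∈ Finset.univ.erase i, b l / (b l - b i)) *
              Real.exp (-(a * p0 * r)) * ((a * r + b i) * p0 + 1) / (a * r + b i) ^ 2) := by
  classical
  set f : ℝ → ℝ := fun u => ∑ i : Fin K,
      a * b i * (∏ l ∈ Finset.univ.erase i, b l / (b l - b i)) *
        Real.exp (-(a * p0 * u)) * ((a * u + b i) * p0 + 1) / (a * u + b i) ^ 2 with hf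
  set g : ℝ → ENNReal := fun u =>
    Set.indicator (Set.Ici (0:ℝ)) (fun u => ENNReal.ofReal (f u)) u with hg
  set T : Ω → ℝ := fun ω => ∑ i : Fin K, Y i ω with hTdef
  have hT : Measurable T := by
    apply Finset.measurable_sum
    exact fun i _ => hYmeas i
  have hReq : R = fun ω => X ω / (T ω + p0) := funext hR
  have hRmeas : Measurable R := by
    rw [hReq]; exact hXmeas.div (hT.add_const p0)
  have hfmeas : Measurable f := by
    apply Finset.measurable_sum
    intro i _
    apply Measurable.div
    · fun_prop
    · fun_prop
  have hgmeas : Measurable g := hfmeas.ennreal_ofReal.indicator measurableSet_Ici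
  -- the candidate law
  set D : Measure ℝ := volume.withDensity g with hD
  -- CDF of D
  have hDIic : ∀ r : ℝ, D (Set.Iic r) =
      ENNReal.ofReal (if 0 ≤ r then
        1 - Real.exp (-(a * p0 * r)) * ∏ i : Fin K, b i / (a * r + b i) else 0) := by
    intro r
    rw [hD, withDensity_apply _ measurableSet_Iic, lintegral_indicator measurableSet_Ici,
      Measure.restrict_restrict measurableSet_Ici, Set.Ici_inter_Iic]
    by_cases hr : 0 ≤ r
    · rw [if_pos hr]
      have hcont : ContinuousOn f (Set.uIcc 0 r) := cont_f ha hpos hr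
      have hInt : IntegrableOn f (Set.Icc 0 r) volume := by
        refine (hcont.mono ?_).integrableOn_Icc
        rw [Set.uIcc_of_le hr]
      have hnn : 0 ≤ᵐ[volume.restrict (Set.Icc 0 r)] f := by
        filter_upwards [ae_restrict_mem measurableSet_Icc] with u hu
        exact f_nonneg hK ha hp0 hpos hdist hu.1
      rw [← ofReal_integral_eq_lintegral_ofReal hInt hnn]
      congr 1
      rw [MeasureTheory.integral_Icc_eq_integral_Ioc,
        ← intervalIntegral.integral_of_le hr]
      exact integral_f hK ha hp0 hpos hdist hr
    · rw [if_neg hr, Set.Icc_eq_empty hr]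
      simp
  -- a.e. nonnegativity facts
  have hX0 : ∀ᵐ ω ∂μ, 0 ≤ X ω := ae_nonneg_of_expLaw hXmeas ha hXdist
  have hT0 : ∀ᵐ ω ∂μ, 0 ≤ T ω := by
    have h : ∀ᵐ ω ∂μ, ∀ i, 0 ≤ Y i ω :=
      (MeasureTheory.ae_all_iff).2 fun i => ae_nonneg_of_expLaw (hYmeas i) (hpos i) (hYdist i)
    filter_upwards [h] with ω hω
    exact Finset.sum_nonneg fun i _ => hω i
  -- independence of T and X
  have hconsmeas : ∀ i, Measurable ((Fin.cons X Y : Fin (K + 1) → Ω → ℝ) i) := by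
    intro i
    refine Fin.cases ?_ ?_ i
    · simpa using hXmeas
    · intro j; simpa using hYmeas j
  set s : Finset (Fin (K + 1)) := Finset.univ.image Fin.succ with hs
  have h0s : (0 : Fin (K + 1)) ∉ s := by
    simp only [hs, Finset.mem_image]
    rintro ⟨j, -, hj⟩
    exact Fin.succ_ne_zero j hj
  have hsumT : (∑ j ∈ s, (Fin.cons X Y : Fin (K + 1) → Ω → ℝ) j) = T := by
    rw [hs, Finset.sum_image (fun i _ j _ h => Fin.succ_injective K h)]
    funext ω
    rw [Finset.sum_apply]
    simp [hTdef]
  have hTX : IndepFun T X μ := by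
    have h := hindep.indepFun_finsetSum_of_notMem hconsmeas h0s
    rwa [hsumT, Fin.cons_zero] at h
  have hmapprod : μ.map (fun ω => (T ω, X ω)) = (μ.map T).prod (μ.map X) :=
    (indepFun_iff_map_prod_eq_prod_map_map hT.aemeasurable hXmeas.aemeasurable).mp hTX
  have hνprob : IsProbabilityMeasure (μ.map T) := Measure.isProbabilityMeasure_map hT.aemeasurable
  have hν0 : ∀ᵐ t ∂(μ.map T), 0 ≤ t := by
    rw [MeasureTheory.ae_map_iff hT.aemeasurable (by exact measurableSet_Ici : MeasurableSet {t : ℝ | 0 ≤ t})]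
    exact hT0
  -- CDF of map R μ
  have hRIic : ∀ r : ℝ, (μ.map R) (Set.Iic r) =
      ENNReal.ofReal (if 0 ≤ r then
        1 - Real.exp (-(a * p0 * r)) * ∏ i : Fin K, b i / (a * r + b i) else 0) := by
    intro r
    rw [Measure.map_apply hRmeas measurableSet_Iic]
    by_cases hr : 0 ≤ r
    swap
    · rw [if_neg hr, ENNReal.ofReal_zero]
      have hae : ∀ᵐ ω ∂μ, ¬ (R ω ∈ Set.Iic r) := by
        filter_upwards [hX0, hT0] with ω h1 h2
        rw [Set.mem_Iic, hR ω, not_le]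
        refine lt_of_lt_of_le (not_le.mp hr) ?_
        positivity
      have := MeasureTheory.ae_iff.mp hae
      simp [not_not] at this
      exact this
    rw [if_pos hr]
    -- rewrite the event
    have hsetae : (R ⁻¹' Set.Iic r : Set Ω) =ᵐ[μ] {ω | X ω ≤ r * (T ω + p0)} := by
      have : ∀ᵐ ω ∂μ, ((R ⁻¹' Set.Iic r : Set Ω) ω ↔ ({ω | X ω ≤ r * (T ω + p0)} : Set Ω) ω) := by
        filter_upwards [hT0] with ω h2
        have hpos' : (0:ℝ) < T ω + p0 := by linarith
        show R ω ≤ r ↔ X ω ≤ r * (T ω + p0)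
        rw [hR ω]
        exact div_le_iff₀ hpos'
      exact Filter.eventuallyEq_set.mpr this
    rw [measure_congr hsetae]
    have hsetmeas : MeasurableSet {p : ℝ × ℝ | p.2 ≤ r * (p.1 + p0)} :=
      measurableSet_le measurable_snd (by fun_prop)
    have hpre : ({ω | X ω ≤ r * (T ω + p0)} : Set Ω) =
        (fun ω => (T ω, X ω)) ⁻¹' {p : ℝ × ℝ | p.2 ≤ r * (p.1 + p0)} := rfl
    rw [hpre, ← Measure.map_apply (hT.prodMk hXmeas) hsetmeas, hmapprod,
      Measure.prod_apply hsetmeas]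
    have hslice : ∀ t : ℝ, (Prod.mk t ⁻¹' {p : ℝ × ℝ | p.2 ≤ r * (p.1 + p0)}) =
        Set.Iic (r * (t + p0)) := fun t => rfl
    -- pointwise value of the inner measure, a.e. in t
    have hcongr : ∀ᵐ t ∂(μ.map T), (μ.map X) (Prod.mk t ⁻¹' {p : ℝ × ℝ | p.2 ≤ r * (p.1 + p0)}) =
        (1 : ENNReal) - ENNReal.ofReal (Real.exp (-(a * p0 * r)) * Real.exp (-(a * r * t))) := by
      filter_upwards [hν0] with t ht
      rw [hslice t, hXdist, expMeasure_Iic ha, if_pos (by positivity)]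
      have hexp : Real.exp (-(a * (r * (t + p0)))) =
          Real.exp (-(a * p0 * r)) * Real.exp (-(a * r * t)) := by
        rw [← Real.exp_add]; ring_nf
      rw [ENNReal.ofReal_sub _ (by positivity), ENNReal.ofReal_one, hexp]
    rw [lintegral_congr_ae hcongr]
    -- split the subtraction
    have hwle : (fun t : ℝ => ENNReal.ofReal (Real.exp (-(a * p0 * r)) * Real.exp (-(a * r * t))))
        ≤ᵐ[μ.map T] fun _ => (1 : ENNReal) := by
      filter_upwards [hν0] with t ht
      refine ENNReal.ofReal_le_one.mpr ?_
      have h1 : Real.exp (-(a * p0 * r)) ≤ 1 := Real.exp_le_one_iff.mpr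
        (by nlinarith [mul_nonneg (mul_nonneg ha.le hp0.le) hr])
      have h2 : Real.exp (-(a * r * t)) ≤ 1 := Real.exp_le_one_iff.mpr
        (by nlinarith [mul_nonneg (mul_nonneg ha.le hr) ht])
      nlinarith [Real.exp_pos (-(a * p0 * r)), Real.exp_pos (-(a * r * t))]
    have hwmeas : Measurable fun t : ℝ =>
        ENNReal.ofReal (Real.exp (-(a * p0 * r)) * Real.exp (-(a * r * t))) := by fun_prop
    have hwfin : ∫⁻ t, ENNReal.ofReal (Real.exp (-(a * p0 * r)) * Real.exp (-(a * r * t)))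
        ∂(μ.map T) ≠ ⊤ := by
      refine ne_of_lt (lt_of_le_of_lt (lintegral_mono_ae hwle) ?_)
      simp
    rw [lintegral_sub hwmeas hwfin hwle, lintegral_one, measure_univ]
    -- compute the Laplace transform via the mgf
    have hmgf : mgf T μ (-(a * r)) = ∏ i : Fin K, b i / (a * r + b i) := by
      rw [← hsumT, ProbabilityTheory.iIndepFun.mgf_sum hindep hconsmeas s, hs,
        Finset.prod_image (fun i _ j _ h => Fin.succ_injective K h)]
      refine Finset.prod_congr rfl fun i _ => ?_
      rw [Fin.cons_succ, mgf_expLaw (hYmeas i) (hpos i) (by positivity) (hYdist i)]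
      rw [add_comm]
    have hLam : ∫⁻ t, ENNReal.ofReal (Real.exp (-(a * r * t))) ∂(μ.map T) =
        ENNReal.ofReal (∏ i : Fin K, b i / (a * r + b i)) := by
      rw [← hmgf, mgf]
      rw [integral_eq_lintegral_of_nonneg_ae
        (Filter.Eventually.of_forall fun ω => (Real.exp_pos _).le)
        ((hT.const_mul (-(a * r))).exp.aestronglyMeasurable)]
      have heqi : ∀ ω, ENNReal.ofReal (Real.exp (-(a * r) * T ω)) =
          (fun t : ℝ => ENNReal.ofReal (Real.exp (-(a * r * t)))) (T ω) := by
        intro ω; simp [neg_mul]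
      rw [lintegral_congr heqi,
        ← lintegral_map (f := fun t : ℝ => ENNReal.ofReal (Real.exp (-(a * r * t))))
          (by fun_prop) hT]
      have hfin : ∫⁻ t, ENNReal.ofReal (Real.exp (-(a * r * t))) ∂(μ.map T) ≠ ⊤ := by
        refine ne_of_lt (lt_of_le_of_lt (lintegral_mono_ae ?_) (by simp :
          (∫⁻ _, (1:ENNReal) ∂(μ.map T)) < ⊤))
        filter_upwards [hν0] with t ht
        exact ENNReal.ofReal_le_one.mpr (Real.exp_le_one_iff.mpr
          (by nlinarith [mul_nonneg (mul_nonneg ha.le hr) ht]))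
      rw [ENNReal.ofReal_toReal hfin]
    have hsplit : ∫⁻ t, ENNReal.ofReal (Real.exp (-(a * p0 * r)) * Real.exp (-(a * r * t)))
        ∂(μ.map T) = ENNReal.ofReal (Real.exp (-(a * p0 * r)) *
          ∏ i : Fin K, b i / (a * r + b i)) := by
      have hptw : ∀ t : ℝ, ENNReal.ofReal (Real.exp (-(a * p0 * r)) * Real.exp (-(a * r * t))) =
          ENNReal.ofReal (Real.exp (-(a * p0 * r))) * ENNReal.ofReal (Real.exp (-(a * r * t))) :=
        fun t => ENNReal.ofReal_mul (Real.exp_pos _).le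
      rw [lintegral_congr hptw, lintegral_const_mul' _ _ ENNReal.ofReal_ne_top, hLam,
        ← ENNReal.ofReal_mul (Real.exp_pos _).le]
    rw [hsplit]
    -- final ENNReal arithmetic
    have hprodnn : (0:ℝ) ≤ ∏ i : Fin K, b i / (a * r + b i) :=
      Finset.prod_nonneg (fun i _ =>
        div_nonneg (hpos i).le (by nlinarith [hpos i, mul_nonneg ha.le hr] : (0:ℝ) ≤ a * r + b i))
    have hprodle : Real.exp (-(a * p0 * r)) * ∏ i : Fin K, b i / (a * r + b i) ≤ 1 := by
      have h1 : Real.exp (-(a * p0 * r)) ≤ 1 := Real.exp_le_one_iff.mpr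
        (by nlinarith [mul_nonneg (mul_nonneg ha.le hp0.le) hr])
      have h2 : ∏ i : Fin K, b i / (a * r + b i) ≤ 1 := by
        refine Finset.prod_le_one (fun i _ => div_nonneg (hpos i).le
          (by nlinarith [hpos i, mul_nonneg ha.le hr])) (fun i _ => ?_)
        rw [div_le_one (by nlinarith [hpos i, mul_nonneg ha.le hr])]
        nlinarith [hpos i, mul_nonneg ha.le hr]
      nlinarith [Real.exp_pos (-(a * p0 * r))]
    rw [ENNReal.ofReal_sub _ (mul_nonneg (Real.exp_pos _).le hprodnn), ENNReal.ofReal_one]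
  -- conclude map R μ = D
  have hprobmap : IsProbabilityMeasure (μ.map R) := Measure.isProbabilityMeasure_map hRmeas.aemeasurable
  have hmapD : μ.map R = D :=
    MeasureTheory.Measure.ext_of_Iic (μ.map R) D (fun r => by rw [hRIic r, hDIic r])
  have hHas : HasPDF R μ volume :=
    hasPDF_of_map_eq_withDensity hRmeas.aemeasurable g hgmeas.aemeasurable hmapD
  refine ⟨hHas, ?_⟩
  have hpdf : pdf R μ volume =ᵐ[volume] g := by
    rw [pdf_def, hmapD, hD]
    exact Measure.rnDeriv_withDensity volume hgmeas
  have hpdf' := ae_restrict_of_ae (s := Set.Ici (0:ℝ)) hpdf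
  filter_upwards [hpdf', ae_restrict_mem measurableSet_Ici] with r h1 h2
  rw [h1, hg]
  simp only [Set.indicator_of_mem h2]
  rfl
end

section
/- Let a > 0, p_0 > 0, let K ≥ 1, and let b_1, …, b_K be pairwise distinct positive reals with A_i = ∏_{l ≠ i} b_l / (b_l − b_i). Then ∫_0^∞ Σ_{i=1}^{K} a · b_i · A_i · e^{−a p_0 r} · ((a r + b_i) p_0 + 1) / (a r + b_i)² dr = 1. -/
open Finset Real MeasureTheory Filter

lemma sumA_eq_one {K : ℕ} (hK : 1 ≤ K) (b : Fin K → ℝ) (hdist : Function.Injective b) :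
    ∑ i : Fin K, (∏ l ∈ Finset.univ.erase i, b l / (b l - b i)) = 1 := by
  have hne : (Finset.univ : Finset (Fin K)).Nonempty := by
    have : Nonempty (Fin K) := Fin.pos_iff_nonempty.mp hK
    exact Finset.univ_nonempty
  have h := Lagrange.sum_basis (s := (Finset.univ : Finset (Fin K))) (v := b)
    (hdist.injOn) hne
  have h0 := congrArg (Polynomial.eval (0 : ℝ)) h
  rw [Polynomial.eval_finset_sum, Polynomial.eval_one] at h0
  rw [← h0]
  refine Finset.sum_congr rfl fun i _ => ?_
  rw [Lagrange.basis, Polynomial.eval_prod]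
  refine Finset.prod_congr rfl fun l _ => ?_
  simp only [Lagrange.basisDivisor, Polynomial.eval_mul, Polynomial.eval_C, Polynomial.eval_sub,
    Polynomial.eval_X]
  rw [div_eq_mul_inv, ← neg_sub (b i) (b l), inv_neg]
  ring

/-- The SINR density of Proposition 1 integrates to one. -/
theorem stmt_9 (a p0 : ℝ) (ha : 0 < a) (hp0 : 0 < p0)
    (K : ℕ) (hK : 1 ≤ K) (b : Fin K → ℝ)
    (hpos : ∀ i, 0 < b i) (hdist : Function.Injective b) :
    ∫ r in Set.Ioi (0 : ℝ),
        ∑ i : Fin K,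
          a * b i * (∏ l ∈ Finset.univ.erase i, b l / (b l - b i)) *
            Real.exp (-(a * p0 * r)) * ((a * r + b i) * p0 + 1) / (a * r + b i) ^ 2 = 1 := by
  set A : Fin K → ℝ := fun i => ∏ l ∈ Finset.univ.erase i, b l / (b l - b i) with hA
  set f : Fin K → ℝ → ℝ := fun i r =>
    a * b i * A i * Real.exp (-(a * p0 * r)) * ((a * r + b i) * p0 + 1) / (a * r + b i) ^ 2
    with hf
  have hD : ∀ (i : Fin K) (r : ℝ), 0 ≤ r → 0 < a * r + b i := fun i r hr => by
    have := hpos i; nlinarith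
  -- integrability of each term
  have hInt : ∀ i : Fin K, IntegrableOn (f i) (Set.Ioi 0) := by
    intro i
    have hbi := hpos i
    have hg : IntegrableOn
        (fun r => |a * b i * A i| * (p0 / b i + 1 / (b i) ^ 2) * Real.exp (-(a * p0) * r))
        (Set.Ioi 0) := by
      exact (exp_neg_integrableOn_Ioi 0 (by positivity)).const_mul _
    refine Integrable.mono' hg ?_ ?_
    · -- measurability
      apply ContinuousOn.aestronglyMeasurable _ measurableSet_Ioi
      apply ContinuousOn.div (by fun_prop) (by fun_prop)
      intro r hr
      have hr' : (0:ℝ) < r := hr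
      have := hD i r hr'.le
      positivity
    · rw [ae_restrict_iff' measurableSet_Ioi]
      filter_upwards with r hr
      have hr' : (0:ℝ) < r := hr
      have hDr := hD i r hr'.le
      have hfr : f i r = (a * b i * A i) *
          (Real.exp (-(a * p0 * r)) * ((a * r + b i) * p0 + 1) / (a * r + b i) ^ 2) := by
        simp only [hf]; ring
      have hbound : Real.exp (-(a * p0 * r)) * ((a * r + b i) * p0 + 1) / (a * r + b i) ^ 2
          ≤ (p0 / b i + 1 / (b i) ^ 2) * Real.exp (-(a * p0) * r) := by
        have hle : b i ≤ a * r + b i := by nlinarith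
        have h1 : ((a * r + b i) * p0 + 1) / (a * r + b i) ^ 2
            = p0 / (a * r + b i) + 1 / (a * r + b i) ^ 2 := by
          field_simp
        have h2 : p0 / (a * r + b i) ≤ p0 / b i :=
          div_le_div_of_nonneg_left hp0.le hbi hle
        have h3 : 1 / (a * r + b i) ^ 2 ≤ 1 / (b i) ^ 2 := by
          apply one_div_le_one_div_of_le (by positivity)
          exact pow_le_pow_left₀ hbi.le hle 2
        have hexp : Real.exp (-(a * p0 * r)) = Real.exp (-(a * p0) * r) := by ring_nf
        rw [mul_div_assoc, h1, hexp, mul_comm]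
        have hE : 0 < Real.exp (-(a * p0) * r) := Real.exp_pos _
        nlinarith
      have hnn : 0 ≤ Real.exp (-(a * p0 * r)) * ((a * r + b i) * p0 + 1)
          / (a * r + b i) ^ 2 := by positivity
      rw [hfr, norm_mul, norm_eq_abs, norm_eq_abs, abs_of_nonneg hnn]
      calc |a * b i * A i| *
            (Real.exp (-(a * p0 * r)) * ((a * r + b i) * p0 + 1) / (a * r + b i) ^ 2)
          ≤ |a * b i * A i| * ((p0 / b i + 1 / (b i) ^ 2) * Real.exp (-(a * p0) * r)) :=
            mul_le_mul_of_nonneg_left hbound (abs_nonneg _)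
        _ = |a * b i * A i| * (p0 / b i + 1 / (b i) ^ 2) * Real.exp (-(a * p0) * r) := by ring
  -- value of each integral
  have hIntegral : ∀ i : Fin K, ∫ r in Set.Ioi (0:ℝ), f i r = A i := by
    intro i
    have hbi := hpos i
    set F : ℝ → ℝ := fun r => -(b i * A i) * (Real.exp (-(a * p0 * r)) / (a * r + b i)) with hF
    have hderiv : ∀ x ∈ Set.Ici (0:ℝ), HasDerivAt F (f i x) x := by
      intro x hx
      have hDx := hD i x hx
      have h1 : HasDerivAt (fun r : ℝ => Real.exp (-(a * p0 * r)))
          (Real.exp (-(a * p0 * x)) * (-(a * p0))) x := by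
        simpa using (((hasDerivAt_id x).const_mul (a * p0)).neg).exp
      have h2 : HasDerivAt (fun r : ℝ => a * r + b i) a x := by
        simpa using ((hasDerivAt_id x).const_mul a).add_const (b i)
      have h3 := (h1.div h2 (ne_of_gt hDx)).const_mul (-(b i * A i))
      refine h3.congr_deriv ?_
      simp only [hf, mul_one]
      field_simp
      ring
    have htend : Tendsto F atTop (nhds 0) := by
      have he : Tendsto (fun r : ℝ => Real.exp (-(a * p0 * r))) atTop (nhds 0) := by
        have h' : Tendsto (fun r : ℝ => a * p0 * r) atTop atTop :=
          Tendsto.const_mul_atTop (by positivity) tendsto_id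
        exact Real.tendsto_exp_neg_atTop_nhds_zero.comp h'
      have hinv : Tendsto (fun r : ℝ => (a * r + b i)⁻¹) atTop (nhds 0) := by
        apply Tendsto.inv_tendsto_atTop
        apply tendsto_atTop_add_const_right
        exact Tendsto.const_mul_atTop ha tendsto_id
      have := (he.mul hinv).const_mul (-(b i * A i))
      simpa [hF, div_eq_mul_inv] using this
    have := MeasureTheory.integral_Ioi_of_hasDerivAt_of_tendsto' hderiv (hInt i) htend
    rw [this]
    simp only [hF]
    rw [show a * (0:ℝ) + b i = b i by ring, show -(a * p0 * (0:ℝ)) = 0 by ring, Real.exp_zero]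
    field_simp
    ring
  -- put everything together
  have hsum : ∫ r in Set.Ioi (0:ℝ), ∑ i : Fin K, f i r
      = ∑ i : Fin K, ∫ r in Set.Ioi (0:ℝ), f i r :=
    MeasureTheory.integral_finset_sum _ fun i _ => hInt i
  calc ∫ r in Set.Ioi (0:ℝ), ∑ i : Fin K, f i r
      = ∑ i : Fin K, ∫ r in Set.Ioi (0:ℝ), f i r := hsum
    _ = ∑ i : Fin K, A i := by simp only [hIntegral]
    _ = 1 := sumA_eq_one hK b hdist
end
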